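/- arXiv:2311.07013 — 3 statements merged into one kernel-verified Lean document; each statement's English description precedes it below -/
import Mathlib

section
/- Let π be a probability measure on Θ and let L, L_n : Θ → ℝ be measurable with e^{n(L−L_n)} π-integrable. Define ζ_n = E_{θ∼π}[e^{n(L(θ)−L_n(θ))}]. If ζ_n is a nonnegative random variable (depending on the sample) with finite expectation, then with probability at least 1−δ over the sample, for every probability measure ρ ≪ π with finite KL(ρ‖π): E_{θ∼ρ} L(θ) ≤ E_{θ∼ρ} L_n(θ) + (1/n)[KL(ρ‖π) + log E[ζ_n] + log(1/δ)]. -/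
open MeasureTheory


lemma dv_aux {Θ : Type*} [MeasurableSpace Θ] (π ρ : Measure Θ)
    [IsProbabilityMeasure π] [IsProbabilityMeasure ρ]
    (hρπ : ρ ≪ π) (f : Θ → ℝ) (hf : Measurable f)
    (hef : Integrable (fun θ => Real.exp (f θ)) π)
    (hkl : Integrable (fun θ => Real.log (ρ.rnDeriv π θ).toReal) ρ)
    (hfi : Integrable f ρ) :
    ∫ θ, f θ ∂ρ ≤ (∫ θ, Real.log (ρ.rnDeriv π θ).toReal ∂ρ)
      + Real.log (∫ θ, Real.exp (f θ) ∂π) := by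
  set g : Θ → ℝ := fun θ => (ρ.rnDeriv π θ).toReal with hg_def
  have hg_meas : Measurable g := (Measure.measurable_rnDeriv ρ π).ennreal_toReal
  have hgpos : ∀ᵐ θ ∂ρ, 0 < g θ := by
    filter_upwards [Measure.rnDeriv_pos hρπ, hρπ.ae_le (Measure.rnDeriv_lt_top ρ π)]
      with θ h1 h2
    exact ENNReal.toReal_pos h1.ne' h2.ne
  set h : Θ → ℝ := fun θ => Real.exp (f θ) / g θ with hh_def
  have hh_meas : Measurable h := (hf.exp).div hg_meas
  have hgh_le : ∀ θ, g θ • h θ ≤ Real.exp (f θ) := by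
    intro θ
    by_cases hgz : g θ = 0
    · simp [hh_def, hgz, (Real.exp_pos (f θ)).le]
    · have hg0 : 0 ≤ g θ := ENNReal.toReal_nonneg
      rw [smul_eq_mul, hh_def]
      rw [mul_div_cancel₀ _ hgz]
  have hgh_nonneg : ∀ θ, 0 ≤ g θ • h θ := by
    intro θ
    exact smul_nonneg ENNReal.toReal_nonneg (div_nonneg (Real.exp_pos _).le ENNReal.toReal_nonneg)
  have hgh_int : Integrable (fun θ => g θ • h θ) π := by
    refine hef.mono ((hg_meas.smul hh_meas).aestronglyMeasurable) ?_
    refine Filter.Eventually.of_forall fun θ => ?_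
    rw [Real.norm_eq_abs, Real.norm_eq_abs, abs_of_nonneg (hgh_nonneg θ),
      abs_of_nonneg (Real.exp_pos _).le]
    exact hgh_le θ
  have hh_int : Integrable h ρ := (integrable_rnDeriv_smul_iff hρπ).mp hgh_int
  have hint_eq : ∫ θ, h θ ∂ρ = ∫ θ, g θ • h θ ∂π := (integral_rnDeriv_smul hρπ).symm
  set c : ℝ := ∫ θ, h θ ∂ρ with hc_def
  have hc_le : c ≤ ∫ θ, Real.exp (f θ) ∂π := by
    rw [hint_eq]
    exact integral_mono hgh_int hef hgh_le
  have hhpos : ∀ᵐ θ ∂ρ, 0 < h θ := by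
    filter_upwards [hgpos] with θ hθ
    exact div_pos (Real.exp_pos _) hθ
  have hcpos : 0 < c := by
    rw [hc_def, integral_pos_iff_support_of_nonneg_ae
      (hhpos.mono fun θ hθ => hθ.le) hh_int]
    by_contra hps
    push_neg at hps
    have hps0 : ρ (Function.support h) = 0 := le_antisymm hps zero_le
    have : ρ (Function.support h)ᶜ = 0 := by
      refine measure_mono_null ?_ (ae_iff.mp hhpos)
      intro θ hθ
      simp only [Set.mem_compl_iff, Function.mem_support, not_not] at hθ
      simp [hθ]
    have huniv : (ρ Set.univ) ≤ 0 := by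
      calc ρ Set.univ ≤ ρ (Function.support h) + ρ (Function.support h)ᶜ := by
            rw [← Set.union_compl_self (Function.support h)]; exact measure_union_le _ _
        _ = 0 := by rw [hps0, this, add_zero]
    simp [measure_univ] at huniv
  -- pointwise bound
  have hpw : ∀ᵐ θ ∂ρ, f θ - Real.log (g θ) ≤ h θ / c - 1 + Real.log c := by
    filter_upwards [hgpos, hhpos] with θ hg hh
    have hlogh : Real.log (h θ) = f θ - Real.log (g θ) := by
      rw [hh_def]
      rw [Real.log_div (Real.exp_ne_zero _) hg.ne', Real.log_exp]
    have h1 : Real.log (h θ / c) ≤ h θ / c - 1 :=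
      Real.log_le_sub_one_of_pos (div_pos hh hcpos)
    rw [Real.log_div hh.ne' hcpos.ne'] at h1
    linarith [hlogh ▸ h1]
  have hrhs_int : Integrable (fun θ => h θ / c - 1 + Real.log c) ρ :=
    ((hh_int.div_const c).sub (integrable_const 1)).add (integrable_const _)
  have hlhs_int : Integrable (fun θ => f θ - Real.log (g θ)) ρ := hfi.sub hkl
  have hmain : ∫ θ, (f θ - Real.log (g θ)) ∂ρ ≤ Real.log c := by
    calc ∫ θ, (f θ - Real.log (g θ)) ∂ρ ≤ ∫ θ, (h θ / c - 1 + Real.log c) ∂ρ :=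
          integral_mono_ae hlhs_int hrhs_int hpw
      _ = (∫ θ, h θ ∂ρ) / c - 1 + Real.log c := by
          have h1 : Integrable (fun θ => h θ / c - 1) ρ :=
            (hh_int.div_const c).sub (integrable_const 1)
          rw [integral_add h1 (integrable_const _),
            integral_sub (hh_int.div_const c) (integrable_const 1), integral_div,
            integral_const, integral_const]
          simp
      _ = Real.log c := by rw [← hc_def, div_self hcpos.ne']; ring
  rw [integral_sub hfi hkl] at hmain
  have hlog_le : Real.log c ≤ Real.log (∫ θ, Real.exp (f θ) ∂π) :=
    Real.log_le_log hcpos hc_le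
  linarith

/-- The core PAC-Bayes bound: with probability at least `1 - δ` over the sample,
for every posterior `ρ ≪ π` with finite KL divergence, the expected true risk is
bounded by the expected empirical risk plus the PAC-Bayes complexity term. -/
theorem pac_bayes_core {Θ Ω : Type*} [MeasurableSpace Θ] [MeasurableSpace Ω]
    (P : Measure Ω) [IsProbabilityMeasure P]
    (π : Measure Θ) [IsProbabilityMeasure π]
    (n : ℕ) (hn : 0 < n)
    (L : Θ → ℝ) (Ln : Ω → Θ → ℝ)
    (hL : Measurable L) (hLn : Measurable (Function.uncurry Ln))
    (δ : ℝ) (hδ0 : 0 < δ) (hδ1 : δ < 1)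
    (hexp : ∀ ω, Integrable (fun θ => Real.exp ((n : ℝ) * (L θ - Ln ω θ))) π)
    (hζ : Integrable
      (fun ω => ∫ θ, Real.exp ((n : ℝ) * (L θ - Ln ω θ)) ∂π) P) :
    P {ω | ∀ ρ : Measure Θ, IsProbabilityMeasure ρ → ρ ≪ π →
        Integrable (fun θ => Real.log (ρ.rnDeriv π θ).toReal) ρ →
        Integrable L ρ → Integrable (Ln ω) ρ →
        ∫ θ, L θ ∂ρ ≤ ∫ θ, Ln ω θ ∂ρ + (1 / (n : ℝ)) *
          ((∫ θ, Real.log (ρ.rnDeriv π θ).toReal ∂ρ)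
            + Real.log (∫ ω', ∫ θ, Real.exp ((n : ℝ) * (L θ - Ln ω' θ)) ∂π ∂P)
            + Real.log (1 / δ))} ≥ ENNReal.ofReal (1 - δ) := by
  set ζ : Ω → ℝ := fun ω => ∫ θ, Real.exp ((n : ℝ) * (L θ - Ln ω θ)) ∂π with hζ_def
  have hn' : (0 : ℝ) < n := by exact_mod_cast hn
  have hζpos : ∀ ω, 0 < ζ ω := fun ω => integral_exp_pos (hexp ω)
  set Z : ℝ := ∫ ω, ζ ω ∂P with hZ_def
  have hZpos : 0 < Z := by
    rw [hZ_def, integral_pos_iff_support_of_nonneg (fun ω => (hζpos ω).le) hζ]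
    have : Function.support ζ = Set.univ := Set.eq_univ_of_forall fun ω => (hζpos ω).ne'
    rw [this, measure_univ]
    norm_num
  set c : ℝ := Z / δ with hc_def
  have hcpos : 0 < c := div_pos hZpos hδ0
  -- Markov's inequality
  have hmarkov : P {ω | c ≤ ζ ω} ≤ ENNReal.ofReal δ := by
    have h1 : c * (P {ω | c ≤ ζ ω}).toReal ≤ Z :=
      mul_meas_ge_le_integral_of_nonneg
        (Filter.Eventually.of_forall fun ω => (hζpos ω).le) hζ c
    have h2 : (P {ω | c ≤ ζ ω}).toReal ≤ δ := by
      have ht : (P {ω | c ≤ ζ ω}).toReal ≤ Z / c := by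
        rw [le_div_iff₀ hcpos]
        linarith [h1]
      have hZc : Z / c = δ := by
        rw [hc_def]
        field_simp
      linarith
    exact (ENNReal.le_ofReal_iff_toReal_le (measure_ne_top P _) hδ0.le).mpr h2
  -- the good event is contained in the target set
  have hsub : {ω | ζ ω ≤ c} ⊆ {ω | ∀ ρ : Measure Θ, IsProbabilityMeasure ρ → ρ ≪ π →
        Integrable (fun θ => Real.log (ρ.rnDeriv π θ).toReal) ρ →
        Integrable L ρ → Integrable (Ln ω) ρ →
        ∫ θ, L θ ∂ρ ≤ ∫ θ, Ln ω θ ∂ρ + (1 / (n : ℝ)) *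
          ((∫ θ, Real.log (ρ.rnDeriv π θ).toReal ∂ρ)
            + Real.log (∫ ω', ∫ θ, Real.exp ((n : ℝ) * (L θ - Ln ω' θ)) ∂π ∂P)
            + Real.log (1 / δ))} := by
    intro ω hω ρ hρ hρπ hkl hintL hintLn
    have hLnω : Measurable (Ln ω) := hLn.comp measurable_prodMk_left
    have hfmeas : Measurable (fun θ => (n : ℝ) * (L θ - Ln ω θ)) :=
      ((hL.sub hLnω).const_mul _)
    have hfi : Integrable (fun θ => (n : ℝ) * (L θ - Ln ω θ)) ρ :=
      (hintL.sub hintLn).const_mul _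
    have hdv := dv_aux π ρ hρπ (fun θ => (n : ℝ) * (L θ - Ln ω θ)) hfmeas (hexp ω) hkl hfi
    have hInt_eq : ∫ θ, (n : ℝ) * (L θ - Ln ω θ) ∂ρ
        = (n : ℝ) * ((∫ θ, L θ ∂ρ) - ∫ θ, Ln ω θ ∂ρ) := by
      rw [integral_const_mul, integral_sub hintL hintLn]
    rw [hInt_eq] at hdv
    have hlogζ : Real.log (ζ ω) ≤ Real.log Z + Real.log (1 / δ) := by
      calc Real.log (ζ ω) ≤ Real.log c := Real.log_le_log (hζpos ω) hω
        _ = Real.log Z + Real.log (1 / δ) := by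
            rw [hc_def, Real.log_div hZpos.ne' hδ0.ne', one_div, Real.log_inv]
            ring
    set KL : ℝ := ∫ θ, Real.log (ρ.rnDeriv π θ).toReal ∂ρ
    have hkey : (n : ℝ) * ((∫ θ, L θ ∂ρ) - ∫ θ, Ln ω θ ∂ρ)
        ≤ KL + Real.log Z + Real.log (1 / δ) := by
      have : Real.log (ζ ω) = Real.log (∫ θ, Real.exp ((n : ℝ) * (L θ - Ln ω θ)) ∂π) := rfl
      linarith [hdv, hlogζ]
    have : (∫ θ, L θ ∂ρ) - ∫ θ, Ln ω θ ∂ρ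
        ≤ (KL + Real.log Z + Real.log (1 / δ)) / n := by
      rw [le_div_iff₀ hn', mul_comm]
      exact hkey
    have hZrw : Real.log Z = Real.log (∫ ω', ζ ω' ∂P) := by rw [hZ_def]
    rw [one_div, inv_mul_eq_div]
    rw [hZ_def] at this
    linarith [this]
  -- conclude by measure monotonicity and complement bound
  have hcompl : {ω | ζ ω ≤ c}ᶜ ⊆ {ω | c ≤ ζ ω} := by
    intro ω hω
    simp only [Set.mem_compl_iff, Set.mem_setOf_eq, not_le] at hω
    exact hω.le
  have hPc : P {ω | ζ ω ≤ c}ᶜ ≤ ENNReal.ofReal δ := (measure_mono hcompl).trans hmarkov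
  have hPE : ENNReal.ofReal (1 - δ) ≤ P {ω | ζ ω ≤ c} := by
    have huniv : (1 : ENNReal) ≤ P {ω | ζ ω ≤ c} + P {ω | ζ ω ≤ c}ᶜ := by
      rw [← measure_univ (μ := P), ← Set.union_compl_self {ω | ζ ω ≤ c}]
      exact measure_union_le _ _
    have h1 : (1 : ENNReal) - P {ω | ζ ω ≤ c}ᶜ ≤ P {ω | ζ ω ≤ c} :=
      tsub_le_iff_right.mpr huniv
    calc ENNReal.ofReal (1 - δ) = 1 - ENNReal.ofReal δ := by
          rw [ENNReal.ofReal_sub _ hδ0.le, ENNReal.ofReal_one]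
      _ ≤ 1 - P {ω | ζ ω ≤ c}ᶜ := tsub_le_tsub_left hPc 1
      _ ≤ P {ω | ζ ω ≤ c} := h1
  exact le_trans hPE (measure_mono hsub)
end

section
/- Let R : ℝ^d → ℝ be continuous with a unique global minimizer θ₀, and suppose R is coercive (R(θ) → ∞ as ‖θ‖ → ∞) and e^{−R/τ} is integrable for all τ > 0. Define π_τ(θ) = e^{−R(θ)/τ} / ∫ e^{−R/τ}. Then for every ε > 0, the π_τ-probability of the ball of radius ε around θ₀ tends to 1 as τ → 0⁺. -/
open MeasureTheory Filter

/-- Concentration of the Gibbs prior `π_τ ∝ e^{-R/τ}` on the unique global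
minimizer `θ₀` of a coercive continuous regularizer `R` as `τ → 0⁺`. -/
theorem gibbs_prior_concentration {d : ℕ}
    (R : EuclideanSpace ℝ (Fin d) → ℝ) (hR : Continuous R)
    (θ₀ : EuclideanSpace ℝ (Fin d))
    (hmin : ∀ θ, θ ≠ θ₀ → R θ₀ < R θ)
    (hcoercive : Tendsto R (cocompact _) atTop)
    (hint : ∀ τ : ℝ, 0 < τ → Integrable (fun θ => Real.exp (-R θ / τ)))
    (ε : ℝ) (hε : 0 < ε) :
    Tendsto
      (fun τ : ℝ =>
        (∫ θ in Metric.ball θ₀ ε, Real.exp (-R θ / τ)) /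
          ∫ θ, Real.exp (-R θ / τ))
      (nhdsWithin 0 (Set.Ioi 0)) (nhds 1) := by
  set m := R θ₀ with hm
  -- Step 1: a positive gap outside the ball
  obtain ⟨c, hc, hout⟩ : ∃ c > 0, ∀ θ ∉ Metric.ball θ₀ ε, m + c ≤ R θ := by
    obtain ⟨K, hK, hKc⟩ :=
      mem_cocompact.mp (hcoercive.eventually (eventually_ge_atTop (m + 1)))
    have hScomp : IsCompact (K \ Metric.ball θ₀ ε) := hK.diff Metric.isOpen_ball
    rcases (K \ Metric.ball θ₀ ε).eq_empty_or_nonempty with hSe | hSne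
    · refine ⟨1, one_pos, fun θ hθ => ?_⟩
      have hθK : θ ∉ K := fun hθK =>
        (Set.eq_empty_iff_forall_notMem.mp hSe θ) ⟨hθK, hθ⟩
      exact hKc hθK
    · obtain ⟨θ₁, hθ₁S, hθ₁min⟩ := hScomp.exists_isMinOn hSne hR.continuousOn
      have hθ₁ne : θ₁ ≠ θ₀ := fun h => hθ₁S.2 (h ▸ Metric.mem_ball_self hε)
      have hgap : m < R θ₁ := hmin θ₁ hθ₁ne
      refine ⟨min 1 (R θ₁ - m), lt_min one_pos (by linarith), fun θ hθ => ?_⟩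
      by_cases hθK : θ ∈ K
      · have h1 : R θ₁ ≤ R θ := hθ₁min ⟨hθK, hθ⟩
        have h2 : min 1 (R θ₁ - m) ≤ R θ₁ - m := min_le_right _ _
        linarith
      · have h1 : m + 1 ≤ R θ := hKc hθK
        have h2 : min 1 (R θ₁ - m) ≤ 1 := min_le_left _ _
        linarith
  -- Step 2: small ball where R is close to m
  have hU : IsOpen (R ⁻¹' Set.Iio (m + c / 2)) := isOpen_Iio.preimage hR
  have hθ₀U : θ₀ ∈ R ⁻¹' Set.Iio (m + c / 2) := by
    simp only [Set.mem_preimage, Set.mem_Iio]; linarith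
  obtain ⟨δ, hδ, hδball⟩ := Metric.mem_nhds_iff.mp (hU.mem_nhds hθ₀U)
  set ε' := min δ ε with hε'def
  have hε' : 0 < ε' := lt_min hδ hε
  set V := (volume (Metric.ball θ₀ ε')).toReal with hVdef
  have hV : 0 < V := by
    refine ENNReal.toReal_pos (ne_of_gt (Metric.measure_ball_pos volume θ₀ hε')) ?_
    exact (measure_ball_lt_top).ne
  set A : ℝ → ℝ := fun τ => ∫ θ in Metric.ball θ₀ ε, Real.exp (-R θ / τ) with hAdef
  set O : ℝ → ℝ := fun τ => ∫ θ in (Metric.ball θ₀ ε)ᶜ, Real.exp (-R θ / τ) with hOdef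
  set K₁ : ℝ := ∫ θ, Real.exp (-R θ / 1) with hK₁def
  have hK₁nn : 0 ≤ K₁ := integral_nonneg fun θ => (Real.exp_pos _).le
  -- Lower bound for A
  have hA : ∀ τ : ℝ, 0 < τ → V * Real.exp (-(m + c / 2) / τ) ≤ A τ := by
    intro τ hτ
    have hsub : Metric.ball θ₀ ε' ⊆ Metric.ball θ₀ ε :=
      Metric.ball_subset_ball (min_le_right δ ε)
    have h1 : ∫ θ in Metric.ball θ₀ ε', Real.exp (-(m + c / 2) / τ)
        ≤ ∫ θ in Metric.ball θ₀ ε', Real.exp (-R θ / τ) := by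
      refine setIntegral_mono_on
        (integrableOn_const measure_ball_lt_top.ne)
        ((hint τ hτ).integrableOn) measurableSet_ball (fun θ hθ => ?_)
      have hθδ : θ ∈ Metric.ball θ₀ δ :=
        Metric.ball_subset_ball (min_le_left δ ε) hθ
      have hRθ : R θ < m + c / 2 := hδball hθδ
      exact Real.exp_le_exp.mpr ((div_le_div_iff_of_pos_right hτ).mpr (by linarith))
    have h2 : ∫ θ in Metric.ball θ₀ ε', Real.exp (-R θ / τ) ≤ A τ := by
      refine setIntegral_mono_set ((hint τ hτ).integrableOn)
        (Eventually.of_forall fun θ => (Real.exp_pos _).le) hsub.eventuallyLE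
    calc V * Real.exp (-(m + c / 2) / τ)
        = ∫ θ in Metric.ball θ₀ ε', Real.exp (-(m + c / 2) / τ) := by
          rw [setIntegral_const, smul_eq_mul]
          rfl
      _ ≤ A τ := le_trans h1 h2
  have hApos : ∀ τ : ℝ, 0 < τ → 0 < A τ := fun τ hτ =>
    lt_of_lt_of_le (mul_pos hV (Real.exp_pos _)) (hA τ hτ)
  -- Upper bound for O
  have hO : ∀ τ : ℝ, 0 < τ → τ ≤ 1 →
      O τ ≤ Real.exp ((m + c) * (1 - 1 / τ)) * K₁ := by
    intro τ hτ hτ1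
    have hintc : Integrable (fun θ =>
        Real.exp ((m + c) * (1 - 1 / τ)) * Real.exp (-R θ / 1)) :=
      (hint 1 one_pos).const_mul _
    have h1 : O τ ≤ ∫ θ in (Metric.ball θ₀ ε)ᶜ,
        Real.exp ((m + c) * (1 - 1 / τ)) * Real.exp (-R θ / 1) := by
      refine setIntegral_mono_on ((hint τ hτ).integrableOn)
        hintc.integrableOn measurableSet_ball.compl (fun θ hθ => ?_)
      have hRθ : m + c ≤ R θ := hout θ hθ
      rw [← Real.exp_add]
      refine Real.exp_le_exp.mpr ?_
      have hu : (1 : ℝ) ≤ 1 / τ := one_le_one_div hτ hτ1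
      have hτne : τ ≠ 0 := ne_of_gt hτ
      rw [div_one, div_eq_mul_inv, ← one_div]
      nlinarith [mul_nonneg (sub_nonneg.mpr hRθ) (sub_nonneg.mpr hu)]
    have h2 : ∫ θ in (Metric.ball θ₀ ε)ᶜ,
        Real.exp ((m + c) * (1 - 1 / τ)) * Real.exp (-R θ / 1)
        ≤ ∫ θ, Real.exp ((m + c) * (1 - 1 / τ)) * Real.exp (-R θ / 1) :=
      setIntegral_le_integral hintc (Eventually.of_forall fun θ => by positivity)
    calc O τ ≤ _ := h1
      _ ≤ _ := h2
      _ = Real.exp ((m + c) * (1 - 1 / τ)) * K₁ := by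
          rw [hK₁def, integral_const_mul]
  have hOnn : ∀ τ : ℝ, 0 ≤ O τ := fun τ =>
    setIntegral_nonneg measurableSet_ball.compl
      (fun θ _ => (Real.exp_pos _).le)
  -- The ratio O/A tends to 0
  have hOA : Tendsto (fun τ => O τ / A τ) (nhdsWithin 0 (Set.Ioi 0)) (nhds 0) := by
    have hmem : Set.Ioc (0 : ℝ) 1 ∈ nhdsWithin (0 : ℝ) (Set.Ioi 0) :=
      Ioc_mem_nhdsGT_of_mem ⟨le_refl 0, zero_lt_one⟩
    refine squeeze_zero' (g := fun τ => (K₁ / V) * Real.exp ((m + c) - (c / 2) * (1 / τ))) ?_ ?_ ?_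
    · exact eventually_of_mem self_mem_nhdsWithin fun τ hτ =>
        div_nonneg (hOnn τ) (hApos τ hτ).le
    · refine eventually_of_mem hmem fun τ hτ => ?_
      have hτ0 : (0 : ℝ) < τ := hτ.1
      calc O τ / A τ
          ≤ (Real.exp ((m + c) * (1 - 1 / τ)) * K₁) /
              (V * Real.exp (-(m + c / 2) / τ)) := by
            refine div_le_div₀ (by positivity) (hO τ hτ0 hτ.2)
              (by positivity) (hA τ hτ0)
        _ = (K₁ / V) * Real.exp ((m + c) - (c / 2) * (1 / τ)) := by
            rw [show (m + c) - (c / 2) * (1 / τ)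
                = ((m + c) * (1 - 1 / τ)) + (-(-(m + c / 2) / τ)) by ring,
              Real.exp_add, Real.exp_neg]
            field_simp
    · have h1τ : Tendsto (fun τ : ℝ => 1 / τ) (nhdsWithin 0 (Set.Ioi 0)) atTop := by
        simpa [one_div] using tendsto_inv_nhdsGT_zero (𝕜 := ℝ)
      have h2 : Tendsto (fun τ : ℝ => (c / 2) * (1 / τ))
          (nhdsWithin 0 (Set.Ioi 0)) atTop :=
        h1τ.const_mul_atTop (by positivity)
      have h3 : Tendsto (fun τ : ℝ => (m + c) - (c / 2) * (1 / τ))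
          (nhdsWithin 0 (Set.Ioi 0)) atBot :=
        tendsto_atBot_add_const_left _ _ (tendsto_neg_atTop_atBot.comp h2)
      have h4 : Tendsto (fun τ : ℝ => Real.exp ((m + c) - (c / 2) * (1 / τ)))
          (nhdsWithin 0 (Set.Ioi 0)) (nhds 0) :=
        Real.tendsto_exp_atBot.comp h3
      simpa using h4.const_mul (K₁ / V)
  -- Conclusion
  have hfinal : Tendsto (fun τ => (1 + O τ / A τ)⁻¹)
      (nhdsWithin 0 (Set.Ioi 0)) (nhds 1) := by
    have := (tendsto_const_nhds.add hOA).inv₀ (by norm_num : (1 + 0 : ℝ) ≠ 0)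
    simpa using this
  refine Tendsto.congr' ?_ hfinal
  refine eventuallyEq_of_mem self_mem_nhdsWithin fun τ hτ => ?_
  have hτ0 : (0 : ℝ) < τ := hτ
  have hB : (∫ θ, Real.exp (-R θ / τ)) = A τ + O τ :=
    (integral_add_compl measurableSet_ball (hint τ hτ0)).symm
  have hA0 : A τ ≠ 0 := (hApos τ hτ0).ne'
  have hAO : A τ + O τ ≠ 0 := by
    have := hOnn τ
    have := hApos τ hτ0
    positivity
  rw [show (1 : ℝ) + O τ / A τ = (A τ + O τ) / A τ by field_simp, inv_div]
  simp only [hB]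
  rfl
end

section
/- Let h : ℝ^d → ℝ be continuous and bounded, and let R : ℝ^d → [0,∞) be continuous and coercive with unique global minimizer θ₀ where R(θ₀) = 0, with e^{−R/τ} integrable for all τ > 0. Then (∫ h(θ) e^{−R(θ)/τ} dθ) / (∫ e^{−R(θ)/τ} dθ) → h(θ₀) as τ → 0⁺. -/
open MeasureTheory Filter

/-- First-order Laplace approximation: for a continuous bounded `h` and a coercive
continuous regularizer `R ≥ 0` with unique global minimizer `θ₀` where `R θ₀ = 0`,
the Gibbs average of `h` under `π_τ ∝ e^{-R/τ}` tends to `h θ₀` as `τ → 0⁺`. -/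
theorem gibbs_average_tendsto {d : ℕ}
    (h : EuclideanSpace ℝ (Fin d) → ℝ) (hh : Continuous h)
    (B : ℝ) (hhB : ∀ θ, |h θ| ≤ B)
    (R : EuclideanSpace ℝ (Fin d) → ℝ) (hR : Continuous R)
    (hR0 : ∀ θ, 0 ≤ R θ)
    (θ₀ : EuclideanSpace ℝ (Fin d)) (hθ₀ : R θ₀ = 0)
    (hmin : ∀ θ, θ ≠ θ₀ → R θ₀ < R θ)
    (hcoercive : Tendsto R (cocompact _) atTop)
    (hint : ∀ τ : ℝ, 0 < τ → Integrable (fun θ => Real.exp (-R θ / τ))) :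
    Tendsto
      (fun τ : ℝ =>
        (∫ θ, h θ * Real.exp (-R θ / τ)) / ∫ θ, Real.exp (-R θ / τ))
      (nhdsWithin 0 (Set.Ioi 0)) (nhds (h θ₀)) := by
  have hB0 : 0 ≤ B := le_trans (abs_nonneg _) (hhB θ₀)
  rw [Metric.tendsto_nhds]
  intro ε hε
  -- δ from continuity of h at θ₀
  obtain ⟨δ, hδ, hδh⟩ := Metric.continuous_iff.mp hh θ₀ (ε / 2) (by positivity)
  -- compact K outside which R ≥ 1
  have h1 : ∀ᶠ θ in cocompact (EuclideanSpace ℝ (Fin d)), (1 : ℝ) ≤ R θ :=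
    hcoercive.eventually (eventually_ge_atTop 1)
  obtain ⟨K, hK, hK1⟩ := (Filter.hasBasis_cocompact.eventually_iff).mp h1
  -- a positive lower bound m for R outside the δ-ball around θ₀
  obtain ⟨m, hm, hmS⟩ :
      ∃ m : ℝ, 0 < m ∧ ∀ θ, θ ∉ Metric.ball θ₀ δ → m ≤ R θ := by
    have hKS : IsCompact (K ∩ (Metric.ball θ₀ δ)ᶜ) :=
      hK.inter_right Metric.isOpen_ball.isClosed_compl
    by_cases hne : (K ∩ (Metric.ball θ₀ δ)ᶜ).Nonempty
    · obtain ⟨x₀, hx₀, hx₀min⟩ := hKS.exists_isMinOn hne hR.continuousOn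
      have hx₀ne : x₀ ≠ θ₀ := by
        intro hx
        have : θ₀ ∈ Metric.ball θ₀ δ := Metric.mem_ball_self hδ
        exact hx₀.2 (hx ▸ this)
      have hx₀pos : 0 < R x₀ := hθ₀ ▸ hmin x₀ hx₀ne
      refine ⟨min 1 (R x₀), lt_min one_pos hx₀pos, fun θ hθ => ?_⟩
      by_cases hθK : θ ∈ K
      · exact le_trans (min_le_right _ _) (hx₀min ⟨hθK, hθ⟩)
      · exact le_trans (min_le_left _ _) (hK1 hθK)
    · refine ⟨1, one_pos, fun θ hθ => ?_⟩
      have hθK : θ ∉ K := fun hk => hne ⟨θ, hk, hθ⟩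
      exact hK1 hθK
  -- δ₂ from continuity of R at θ₀ : R < m/2 on the δ₂-ball
  obtain ⟨δ₂, hδ₂, hδ₂R⟩ := Metric.continuous_iff.mp hR θ₀ (m / 2) (by positivity)
  have hRball : ∀ θ ∈ Metric.ball θ₀ δ₂, R θ ≤ m / 2 := by
    intro θ hθ
    have := hδ₂R θ hθ
    rw [Real.dist_eq, hθ₀, sub_zero, abs_of_nonneg (hR0 θ)] at this
    exact this.le
  set v : ℝ := (volume (Metric.ball θ₀ δ₂)).toReal with hv_def
  have hv : 0 < v :=
    ENNReal.toReal_pos (Metric.measure_ball_pos volume θ₀ hδ₂).ne' measure_ball_lt_top.ne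
  have hCint : Integrable (fun θ => Real.exp (-R θ)) := by
    simpa using hint 1 one_pos
  set C : ℝ := ∫ θ, Real.exp (-R θ) with hC_def
  have hC0 : 0 ≤ C := integral_nonneg fun θ => (Real.exp_pos _).le
  set K' : ℝ := 2 * B * C * Real.exp m / v with hK'_def
  have hK'0 : 0 ≤ K' := by positivity
  -- eventual smallness of the tail factor
  have htend : Tendsto (fun τ : ℝ => K' * Real.exp (-m / (2 * τ)))
      (nhdsWithin 0 (Set.Ioi 0)) (nhds 0) := by
    have h2 : Tendsto (fun τ : ℝ => -m / (2 * τ)) (nhdsWithin 0 (Set.Ioi 0)) atBot := by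
      have h3 : Tendsto (fun τ : ℝ => (-(m / 2)) * τ⁻¹)
          (nhdsWithin 0 (Set.Ioi 0)) atBot :=
        Tendsto.const_mul_atTop_of_neg (by linarith) tendsto_inv_nhdsGT_zero
      refine h3.congr fun τ => by ring
    have := (Real.tendsto_exp_atBot.comp h2).const_mul K'
    simpa using this
  have hE3 : ∀ᶠ τ in nhdsWithin 0 (Set.Ioi 0),
      K' * Real.exp (-m / (2 * τ)) < ε / 2 :=
    htend.eventually_lt_const (by positivity)
  have hE2 : ∀ᶠ τ : ℝ in nhdsWithin 0 (Set.Ioi 0), τ ≤ 1 :=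
    eventually_nhdsWithin_of_eventually_nhds
      (eventually_le_nhds (by norm_num : (0:ℝ) < 1))
  filter_upwards [self_mem_nhdsWithin, hE2, hE3] with τ hτ hτ1 hτ3
  have hτ0 : 0 < τ := hτ
  have hDint : Integrable (fun θ => Real.exp (-R θ / τ)) := hint τ hτ0
  set D : ℝ := ∫ θ, Real.exp (-R θ / τ) with hD_def
  -- lower bound for the denominator
  have hDlb : Real.exp (-(m / 2) / τ) * v ≤ D := by
    have hball : ∀ θ ∈ Metric.ball θ₀ δ₂,
        Real.exp (-(m / 2) / τ) ≤ Real.exp (-R θ / τ) := by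
      intro θ hθ
      apply Real.exp_le_exp.mpr
      have hRθ := hRball θ hθ
      gcongr
    calc Real.exp (-(m / 2) / τ) * v
        ≤ ∫ θ in Metric.ball θ₀ δ₂, Real.exp (-R θ / τ) :=
          setIntegral_ge_of_const_le_real measurableSet_ball measure_ball_lt_top.ne
            hball hDint.integrableOn
      _ ≤ D := setIntegral_le_integral hDint
            (ae_of_all _ fun θ => (Real.exp_pos _).le)
  have hD : 0 < D := lt_of_lt_of_le (by positivity) hDlb
  -- tail bound
  have hTail : ∫ θ in (Metric.ball θ₀ δ)ᶜ, Real.exp (-R θ / τ)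
      ≤ Real.exp (m - m / τ) * C := by
    have hpt : ∀ θ ∈ (Metric.ball θ₀ δ)ᶜ,
        Real.exp (-R θ / τ) ≤ Real.exp (m - m / τ) * Real.exp (-R θ) := by
      intro θ hθ
      rw [← Real.exp_add]
      apply Real.exp_le_exp.mpr
      have hmθ : m ≤ R θ := hmS θ hθ
      have hτne : τ ≠ 0 := ne_of_gt hτ0
      have hfrac : m - m / τ + -R θ - (-R θ / τ) = (R θ - m) * (1 - τ) / τ := by
        field_simp; ring
      have hnn : 0 ≤ (R θ - m) * (1 - τ) / τ :=
        div_nonneg (mul_nonneg (by linarith) (by linarith)) hτ0.le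
      linarith
    calc ∫ θ in (Metric.ball θ₀ δ)ᶜ, Real.exp (-R θ / τ)
        ≤ ∫ θ in (Metric.ball θ₀ δ)ᶜ,
            Real.exp (m - m / τ) * Real.exp (-R θ) :=
          setIntegral_mono_on hDint.integrableOn
            ((hCint.const_mul _).integrableOn) measurableSet_ball.compl hpt
      _ = Real.exp (m - m / τ) * ∫ θ in (Metric.ball θ₀ δ)ᶜ, Real.exp (-R θ) := by
          rw [integral_const_mul]
      _ ≤ Real.exp (m - m / τ) * C := by
          gcongr
          exact setIntegral_le_integral hCint (ae_of_all _ fun θ => (Real.exp_pos _).le)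
  -- integrability of the numerator and of the shifted integrand
  have hNint : Integrable (fun θ => h θ * Real.exp (-R θ / τ)) :=
    hDint.bdd_mul (c := B) hh.aestronglyMeasurable (ae_of_all _ fun θ => by simpa using hhB θ)
  have hGint : Integrable (fun θ => (h θ - h θ₀) * Real.exp (-R θ / τ)) :=
    hDint.bdd_mul ((hh.sub continuous_const).aestronglyMeasurable)
      (c := 2 * B) (ae_of_all _ fun θ => by
        have := hhB θ; have := hhB θ₀
        simp only [Real.norm_eq_abs]
        calc |h θ - h θ₀| ≤ |h θ| + |h θ₀| := abs_sub _ _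
          _ ≤ 2 * B := by linarith)
  set N : ℝ := ∫ θ, h θ * Real.exp (-R θ / τ) with hN_def
  have hsub : ∫ θ, (h θ - h θ₀) * Real.exp (-R θ / τ) = N - h θ₀ * D := by
    have : (fun θ => (h θ - h θ₀) * Real.exp (-R θ / τ))
        = fun θ => h θ * Real.exp (-R θ / τ) - h θ₀ * Real.exp (-R θ / τ) := by
      funext θ; ring
    rw [this, integral_sub hNint (hDint.const_mul _), integral_const_mul]
  -- main numerator bound
  have hNum : |N - h θ₀ * D| ≤ ε / 2 * D + 2 * B * (Real.exp (m - m / τ) * C) := by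
    rw [← hsub]
    have habs : |∫ θ, (h θ - h θ₀) * Real.exp (-R θ / τ)|
        ≤ ∫ θ, |h θ - h θ₀| * Real.exp (-R θ / τ) := by
      have := norm_integral_le_integral_norm (μ := volume)
        (fun θ => (h θ - h θ₀) * Real.exp (-R θ / τ))
      simpa [Real.norm_eq_abs, abs_mul, abs_of_pos (Real.exp_pos _)] using this
    refine le_trans habs ?_
    have hFint : Integrable (fun θ => |h θ - h θ₀| * Real.exp (-R θ / τ)) := by
      have := hGint.abs
      simpa [abs_mul, abs_of_pos (Real.exp_pos _)] using this
    rw [← integral_add_compl (measurableSet_ball (x := θ₀) (ε := δ)) hFint]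
    gcongr
    · -- ball part
      calc ∫ θ in Metric.ball θ₀ δ, |h θ - h θ₀| * Real.exp (-R θ / τ)
          ≤ ∫ θ in Metric.ball θ₀ δ, ε / 2 * Real.exp (-R θ / τ) := by
            refine setIntegral_mono_on hFint.integrableOn
              ((hDint.const_mul _).integrableOn) measurableSet_ball ?_
            intro θ hθ
            have := (hδh θ (Metric.mem_ball.mp hθ)).le
            rw [Real.dist_eq] at this
            exact mul_le_mul_of_nonneg_right this (Real.exp_pos _).le
        _ = ε / 2 * ∫ θ in Metric.ball θ₀ δ, Real.exp (-R θ / τ) := integral_const_mul _ _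
        _ ≤ ε / 2 * D := by
            gcongr
            exact setIntegral_le_integral hDint (ae_of_all _ fun θ => (Real.exp_pos _).le)
    · -- tail part
      calc ∫ θ in (Metric.ball θ₀ δ)ᶜ, |h θ - h θ₀| * Real.exp (-R θ / τ)
          ≤ ∫ θ in (Metric.ball θ₀ δ)ᶜ, 2 * B * Real.exp (-R θ / τ) := by
            refine setIntegral_mono_on hFint.integrableOn
              ((hDint.const_mul _).integrableOn) measurableSet_ball.compl ?_
            intro θ _
            have h1 := hhB θ; have h2 := hhB θ₀
            have : |h θ - h θ₀| ≤ 2 * B := by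
              calc |h θ - h θ₀| ≤ |h θ| + |h θ₀| := abs_sub _ _
                _ ≤ 2 * B := by linarith
            exact mul_le_mul_of_nonneg_right this (Real.exp_pos _).le
        _ = 2 * B * ∫ θ in (Metric.ball θ₀ δ)ᶜ, Real.exp (-R θ / τ) :=
            integral_const_mul _ _
        _ ≤ 2 * B * (Real.exp (m - m / τ) * C) := by gcongr
  -- conclude
  rw [Real.dist_eq]
  have heq : N / D - h θ₀ = (N - h θ₀ * D) / D := by
    field_simp
  rw [heq, abs_div, abs_of_pos hD]
  have step1 : |N - h θ₀ * D| / D ≤ ε / 2 + 2 * B * (Real.exp (m - m / τ) * C) / D := by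
    rw [div_le_iff₀ hD]
    calc |N - h θ₀ * D| ≤ ε / 2 * D + 2 * B * (Real.exp (m - m / τ) * C) := hNum
      _ = (ε / 2 + 2 * B * (Real.exp (m - m / τ) * C) / D) * D := by
          field_simp
  refine lt_of_le_of_lt step1 ?_
  have step2 : 2 * B * (Real.exp (m - m / τ) * C) / D ≤ K' * Real.exp (-m / (2 * τ)) := by
    have hden : Real.exp (-(m / 2) / τ) * v ≤ D := hDlb
    have hnum0 : 0 ≤ 2 * B * (Real.exp (m - m / τ) * C) := by positivity
    have h4 : 2 * B * (Real.exp (m - m / τ) * C) / D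
        ≤ 2 * B * (Real.exp (m - m / τ) * C) / (Real.exp (-(m / 2) / τ) * v) :=
      div_le_div_of_nonneg_left hnum0 (by positivity) hden
    refine le_trans h4 (le_of_eq ?_)
    have hτne : τ ≠ 0 := ne_of_gt hτ0
    rw [hK'_def]
    rw [show m - m / τ = (-m / (2 * τ)) + (-(m / 2) / τ) + m by field_simp; ring,
      Real.exp_add, Real.exp_add]
    field_simp
  linarith
end
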